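/- Let k be a field and R = RCFM(k). Suppose M is an R-module of the form M = Hom_k(k⟨ℕ⟩, W) for some k-vector space W, with R acting by precomposition with the k-linear endomorphisms of k⟨ℕ⟩ given by row-column-finite matrices. If W is finite-dimensional with basis of size d, then M is isomorphic as an R-module to the direct sum of d copies of R/((I−A)R), where A is the shift matrix. -/

import Mathlib

/-- With respect to a basis `b` of the free vector space `F = k⟨ℕ⟩`, an endomorphism of `F`
(automatically column-finite) is given by a row-column-finite matrix iff its matrix
`(i,j) ↦ coefficient of e_i in φ(e_j)` is moreover row-finite. -/
def RowFinite {k F : Type*} [Field k] [AddCommGroup F] [Module k F] (b : Module.Basis ℕ k F)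
    (φ : F →ₗ[k] F) : Prop :=
  ∀ i, {j | b.repr (φ (b j)) i ≠ 0}.Finite

/-- `RCFM(k)`, realized as the space of endomorphisms of `F = k⟨ℕ⟩` given by
row-column-finite matrices. -/
def RCFMsub (k F : Type*) [Field k] [AddCommGroup F] [Module k F] (b : Module.Basis ℕ k F) :
    Submodule k (F →ₗ[k] F) where
  carrier := {φ | RowFinite b φ}
  zero_mem' := by intro i; simp [RowFinite]
  add_mem' := by
    intro φ ψ hφ hψ i
    refine ((hφ i).union (hψ i)).subset fun j hj => ?_
    by_contra hc
    simp only [Set.mem_union, Set.mem_setOf_eq, not_or, not_not] at hc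
    exact hj (by simp [hc.1, hc.2])
  smul_mem' := by
    intro c φ hφ i
    refine (hφ i).subset fun j hj => ?_
    by_contra hc
    simp only [Set.mem_setOf_eq, not_not] at hc
    exact hj (by simp [hc])

/-- Closure of row-column-finiteness under composition (= matrix product). -/
theorem RowFinite.comp {k F : Type*} [Field k] [AddCommGroup F] [Module k F]
    {b : Module.Basis ℕ k F} {φ ψ : F →ₗ[k] F} (hφ : RowFinite b φ) (hψ : RowFinite b ψ) :
    RowFinite b (φ ∘ₗ ψ) := by
  classical
  have key : ∀ (χ : F →ₗ[k] F) (w : F) (i : ℕ),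
      b.repr (χ w) i = (b.repr w).sum fun l t => t * b.repr (χ (b l)) i := by
    intro χ w i
    conv_lhs => rw [← b.linearCombination_repr w, Finsupp.linearCombination_apply]
    rw [map_finsuppSum, map_finsuppSum, Finsupp.sum_apply]
    refine Finsupp.sum_congr fun l _ => ?_
    rw [map_smul, map_smul, Finsupp.smul_apply, smul_eq_mul]
  intro i
  refine (Set.Finite.biUnion (hφ i) fun l _ => hψ l).subset fun j hj => ?_
  simp only [Set.mem_setOf_eq] at hj
  by_contra hc
  simp only [Set.mem_iUnion, Set.mem_setOf_eq, not_exists, not_not] at hc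
  apply hj
  rw [LinearMap.comp_apply, key]
  refine Finset.sum_eq_zero fun l hl => ?_
  by_cases h : b.repr (φ (b l)) i = 0
  · simp [h]
  · have h2 : b.repr (ψ (b j)) l = 0 := hc l h
    rw [Finsupp.mem_support_iff] at hl
    exact absurd h2 hl

/-- The shift matrix `A`, as the endomorphism of `k⟨ℕ⟩` mapping the basis vector `e_j` to
`e_{j+1}`. -/
noncomputable def shiftEnd {k F : Type*} [Field k] [AddCommGroup F] [Module k F]
    (b : Module.Basis ℕ k F) : F →ₗ[k] F :=
  b.constr k fun j => b (j + 1)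

/-- The right ideal `(I−A)·R` of `R = RCFM(k)`, as a `k`-subspace of `R`. -/
noncomputable def Jideal (k F : Type*) [Field k] [AddCommGroup F] [Module k F]
    (b : Module.Basis ℕ k F) : Submodule k (RCFMsub k F b) :=
  Submodule.span k
    {P : RCFMsub k F b | ∃ X, RowFinite b X ∧
      (P : F →ₗ[k] F) = (LinearMap.id - shiftEnd b) ∘ₗ X}

section HelperLemmas
variable {k F : Type*} [Field k] [AddCommGroup F] [Module k F] (b : Module.Basis ℕ k F)

noncomputable def ellF : F →ₗ[k] k := b.constr k fun _ => (1 : k)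

@[simp] lemma ellF_basis (j : ℕ) : ellF b (b j) = 1 := b.constr_basis k _ j

lemma ellF_apply (w : F) : ellF b w = (b.repr w).sum fun _ a => a := by
  rw [ellF, Module.Basis.constr_apply]
  exact Finsupp.sum_congr fun l _ => by simp

lemma repr_shiftEnd (w : F) :
    b.repr (shiftEnd b w) = Finsupp.mapDomain (· + 1) (b.repr w) := by
  have h : (b.repr.toLinearMap ∘ₗ shiftEnd b)
      = Finsupp.lmapDomain k k (· + 1) ∘ₗ b.repr.toLinearMap :=
    b.ext fun j => by simp [shiftEnd]
  exact LinearMap.congr_fun h w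

lemma ell_comp_sub : (ellF b) ∘ₗ (LinearMap.id - shiftEnd b) = 0 :=
  b.ext fun j => by simp [shiftEnd]

/-- Solving `(I - A) Y = X` when all column sums of `X` vanish. -/
lemma exists_solution {X : F →ₗ[k] F} (hXrf : RowFinite b X)
    (hsum0 : ∀ w, ellF b (X w) = 0) :
    ∃ Y : F →ₗ[k] F, RowFinite b Y ∧ X = (LinearMap.id - shiftEnd b) ∘ₗ Y := by
  classical
  set x : ℕ → ℕ →₀ k := fun j => b.repr (X (b j)) with hx
  have hsum : ∀ j, ∑ l ∈ (x j).support, x j l = 0 := by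
    intro j
    have := hsum0 (b j)
    rw [ellF_apply] at this
    simpa [Finsupp.sum] using this
  have hbound : ∀ j i, (x j).support.sup id < i →
      ∑ l ∈ (x j).support.filter (· ≤ i), x j l = 0 := by
    intro j i hi
    rw [Finset.filter_true_of_mem (fun l hl => by
      have := Finset.le_sup (f := id) hl; simp only [id] at this; omega)]
    exact hsum j
  set cf : ℕ → ℕ →₀ k := fun j => Finsupp.onFinset (Finset.range ((x j).support.sup id + 1))
    (fun i => ∑ l ∈ (x j).support.filter (· ≤ i), x j l) (by
      intro i hi
      rw [Finset.mem_range, Nat.lt_succ_iff]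
      by_contra hc
      push_neg at hc
      exact hi (hbound j i hc)) with hcf
  have hcf_apply : ∀ j i, cf j i = ∑ l ∈ (x j).support, if l ≤ i then x j l else 0 := by
    intro j i
    rw [hcf]
    simp only [Finsupp.onFinset_apply]
    exact Finset.sum_filter _ _
  set Y : F →ₗ[k] F := b.constr k fun j => b.repr.symm (cf j) with hY
  have hYrepr : ∀ j, b.repr (Y (b j)) = cf j := by
    intro j
    rw [hY, b.constr_basis, LinearEquiv.apply_symm_apply]
  refine ⟨Y, ?_, ?_⟩
  · intro i
    have hsub : {j | b.repr (Y (b j)) i ≠ 0} ⊆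
        ⋃ l ∈ Finset.range (i + 1), {j | b.repr (X (b j)) l ≠ 0} := by
      intro j hj
      rw [Set.mem_setOf_eq, hYrepr, hcf_apply] at hj
      have : ∃ l ∈ (x j).support, (if l ≤ i then x j l else 0) ≠ 0 := by
        by_contra hc
        push_neg at hc
        exact hj (Finset.sum_eq_zero hc)
      obtain ⟨l, _, hne⟩ := this
      have hle : l ≤ i := by by_contra h; simp [h] at hne
      rw [if_pos hle] at hne
      exact Set.mem_iUnion₂.mpr ⟨l, Finset.mem_range.mpr (Nat.lt_succ_of_le hle), hne⟩
    exact ((Finset.range (i + 1)).finite_toSet.biUnion fun l _ => hXrf l).subset hsub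
  · refine b.ext fun j => ?_
    apply b.repr.injective
    rw [LinearMap.comp_apply, LinearMap.sub_apply, LinearMap.id_apply, map_sub,
      repr_shiftEnd, hYrepr]
    ext i
    rw [Finsupp.sub_apply]
    rcases i with _ | m
    · rw [Finsupp.mapDomain_notin_range _ _ (by simp), sub_zero, hcf_apply]
      have : ∀ l ∈ (x j).support, (if l ≤ 0 then x j l else 0) = if l = 0 then x j l else 0 := by
        intro l _
        simp [Nat.le_zero]
      rw [Finset.sum_congr rfl this, Finset.sum_ite_eq' _ 0 (x j)]
      split
      · rfl
      · exact Finsupp.notMem_support_iff.mp (by assumption)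
    · rw [Finsupp.mapDomain_apply (fun a a' h => by omega) _ m, hcf_apply, hcf_apply,
        ← Finset.sum_sub_distrib]
      have : ∀ l ∈ (x j).support,
          ((if l ≤ m + 1 then x j l else 0) - (if l ≤ m then x j l else 0))
          = if l = m + 1 then x j l else 0 := by
        intro l _
        rcases Nat.lt_trichotomy l (m + 1) with h | h | h
        · rw [if_pos (by omega), if_pos (by omega), if_neg (by omega), sub_self]
        · rw [if_pos (by omega), if_neg (by omega), if_pos h, sub_zero]
        · rw [if_neg (by omega), if_neg (by omega), if_neg (by omega), sub_self]
      rw [Finset.sum_congr rfl this, Finset.sum_ite_eq' _ (m + 1) (x j)]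
      split
      · rfl
      · exact Finsupp.notMem_support_iff.mp (by assumption)

/-- The diagonal matrix with diagonal entries `g (b j)`. -/
noncomputable def diagMap : (F →ₗ[k] k) →ₗ[k] (F →ₗ[k] F) where
  toFun g := b.constr k fun j => g (b j) • b j
  map_add' g g' := by
    have h : (fun j => (g + g') (b j) • b j)
        = (fun j => g (b j) • b j) + (fun j => g' (b j) • b j) := by
      funext j
      simp [add_smul]
    show (b.constr k) (fun j => (g + g') (b j) • b j) = _
    rw [h, map_add]
  map_smul' a g := by
    have h : (fun j => (a • g) (b j) • b j) = a • (fun j => g (b j) • b j) := by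
      funext j
      simp [smul_smul]
    show (b.constr k) (fun j => (a • g) (b j) • b j) = _
    rw [h, map_smul]
    rfl

lemma diag_basis (g : F →ₗ[k] k) (j : ℕ) : diagMap b g (b j) = g (b j) • b j :=
  b.constr_basis k _ j

lemma diag_rowfinite (g : F →ₗ[k] k) : RowFinite b (diagMap b g) := by
  intro i
  refine (Set.finite_singleton i).subset fun j hj => ?_
  by_contra hc
  simp only [Set.mem_singleton_iff] at hc
  apply hj
  show (b.repr (diagMap b g (b j))) i = 0
  rw [diag_basis, map_smul]
  simp [Finsupp.single_apply, hc]

lemma ell_comp_diag (g : F →ₗ[k] k) : ellF b ∘ₗ diagMap b g = g :=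
  b.ext fun j => by
    rw [LinearMap.comp_apply, diag_basis, map_smul, ellF_basis, smul_eq_mul, mul_one]

/-- `X ↦ ℓ ∘ X` as a linear map on `RCFM`. -/
noncomputable def qmap : (RCFMsub k F b) →ₗ[k] (F →ₗ[k] k) :=
  (LinearMap.llcomp k F F k (ellF b)).comp (RCFMsub k F b).subtype

lemma qmap_apply (X : RCFMsub k F b) : qmap b X = ellF b ∘ₗ (X : F →ₗ[k] F) := rfl

lemma mem_Jideal_iff (P : RCFMsub k F b) :
    P ∈ Jideal k F b ↔ qmap b P = 0 := by
  constructor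
  · intro hP
    have hle : Jideal k F b ≤ LinearMap.ker (qmap b) := by
      rw [Jideal, Submodule.span_le]
      rintro Q ⟨X, -, hQ⟩
      rw [SetLike.mem_coe, LinearMap.mem_ker, qmap_apply, hQ, ← LinearMap.comp_assoc,
        ell_comp_sub, LinearMap.zero_comp]
    exact LinearMap.mem_ker.mp (hle hP)
  · intro hq
    have hPrf : RowFinite b (P : F →ₗ[k] F) := P.2
    obtain ⟨Y, hYrf, hYeq⟩ := exists_solution b hPrf (fun w => by
      have := LinearMap.congr_fun hq w
      rw [qmap_apply] at this
      simpa using this)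
    exact Submodule.subset_span ⟨Y, hYrf, hYeq⟩

end HelperLemmas

/-- If `W` is a vector space of dimension `d` over `k`, then `Hom_k(k⟨ℕ⟩, W)`, with
`R = RCFM(k)` acting on the right by precomposition, is isomorphic as a right `R`-module to
the direct sum of `d` copies of `R/((I−A)R)`: there is a `k`-linear equivalence compatible
with the right actions of every row-column-finite matrix `r` (the action on the quotient
being induced by right multiplication, i.e. composition, with `r`). -/
theorem hom_iso_direct_sum (k F : Type*) [Field k] [AddCommGroup F] [Module k F]
    (b : Module.Basis ℕ k F) (W : Type*) [AddCommGroup W] [Module k W] [FiniteDimensional k W]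
    (d : ℕ) (hd : Module.finrank k W = d) :
    ∃ e : (F →ₗ[k] W) ≃ₗ[k] (Fin d → ((RCFMsub k F b) ⧸ Jideal k F b)),
      ∀ (r : F →ₗ[k] F) (hr : RowFinite b r) (f : F →ₗ[k] W) (i : Fin d)
        (x : RCFMsub k F b), e f i = Submodule.Quotient.mk x →
          e (f ∘ₗ r) i =
            Submodule.Quotient.mk (⟨(x : F →ₗ[k] F) ∘ₗ r, x.2.comp hr⟩ : RCFMsub k F b) := by
  classical
  set J := Jideal k F b with hJ
  let cb : Module.Basis (Fin d) k W := Module.finBasisOfFinrankEq k W hd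
  let Dsub : (F →ₗ[k] k) →ₗ[k] RCFMsub k F b :=
    LinearMap.codRestrict (RCFMsub k F b) (diagMap b) fun g => diag_rowfinite b g
  have hq_Dsub : ∀ g, qmap b (Dsub g) = g := by
    intro g
    rw [qmap_apply]
    exact ell_comp_diag b g
  let e₀ : (F →ₗ[k] W) →ₗ[k] (Fin d → (RCFMsub k F b ⧸ J)) :=
    LinearMap.pi fun i => J.mkQ ∘ₗ Dsub ∘ₗ (LinearMap.llcomp k F W k (cb.coord i))
  have he₀ : ∀ f i, e₀ f i = Submodule.Quotient.mk (Dsub (cb.coord i ∘ₗ f)) := fun f i => rfl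
  have hker : J ≤ LinearMap.ker (qmap b) := fun P hP =>
    LinearMap.mem_ker.mpr ((mem_Jideal_iff b P).mp hP)
  let qb : (RCFMsub k F b ⧸ J) →ₗ[k] (F →ₗ[k] k) := J.liftQ (qmap b) hker
  have hqb : ∀ x : RCFMsub k F b, qb (Submodule.Quotient.mk x) = qmap b x := fun x => rfl
  let Qf : (Fin d → (RCFMsub k F b ⧸ J)) → (F →ₗ[k] W) := fun v =>
    ∑ i, (qb (v i)).smulRight (cb i)
  have hmkeq : ∀ x y : RCFMsub k F b, qmap b x = qmap b y →
      (Submodule.Quotient.mk x : RCFMsub k F b ⧸ J) = Submodule.Quotient.mk y := by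
    intro x y hxy
    rw [Submodule.Quotient.eq]
    exact (mem_Jideal_iff b _).mpr (by rw [map_sub, hxy, sub_self])
  have hleft : Function.LeftInverse Qf e₀ := by
    intro f
    apply LinearMap.ext
    intro w
    show (∑ i, (qb (e₀ f i)).smulRight (cb i)) w = f w
    have hco : ∀ i, qb (e₀ f i) = cb.coord i ∘ₗ f := by
      intro i
      rw [he₀, hqb, hq_Dsub]
    simp only [LinearMap.sum_apply, LinearMap.smulRight_apply, hco, LinearMap.comp_apply,
      Module.Basis.coord_apply]
    exact cb.sum_repr (f w)
  have hright : Function.RightInverse Qf e₀ := by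
    intro v
    funext i
    obtain ⟨x, hx⟩ := Submodule.Quotient.mk_surjective J (v i)
    have hcoord : cb.coord i ∘ₗ Qf v = qmap b x := by
      apply LinearMap.ext
      intro w
      show cb.coord i ((∑ i', (qb (v i')).smulRight (cb i')) w) = qmap b x w
      rw [LinearMap.sum_apply, map_sum]
      simp only [LinearMap.smulRight_apply, map_smul, Module.Basis.coord_apply, Module.Basis.repr_self,
        Finsupp.single_apply, smul_eq_mul, mul_ite, mul_one, mul_zero]
      rw [Finset.sum_ite_eq' Finset.univ i, if_pos (Finset.mem_univ i), ← hx, hqb]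
    rw [he₀, hcoord, hmkeq _ x (by rw [hq_Dsub]), hx]
  let e : (F →ₗ[k] W) ≃ₗ[k] (Fin d → (RCFMsub k F b ⧸ J)) :=
    LinearEquiv.ofBijective e₀ (Function.bijective_iff_has_inverse.mpr ⟨Qf, hleft, hright⟩)
  refine ⟨e, ?_⟩
  intro r hr f i x hx
  have he : ∀ g j, e g j = e₀ g j := fun g j => rfl
  rw [he, he₀] at hx
  have hq : qmap b (Dsub (cb.coord i ∘ₗ f)) - qmap b x = 0 := by
    have h1 := (mem_Jideal_iff b _).mp ((Submodule.Quotient.eq J).mp hx)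
    rwa [map_sub] at h1
  have hx' : ellF b ∘ₗ (x : F →ₗ[k] F) = cb.coord i ∘ₗ f := by
    have h2 := sub_eq_zero.mp hq
    rw [hq_Dsub] at h2
    rw [h2]
    exact (qmap_apply b x).symm
  rw [he, he₀]
  apply hmkeq
  rw [hq_Dsub, qmap_apply]
  show cb.coord i ∘ₗ (f ∘ₗ r) = ellF b ∘ₗ ((x : F →ₗ[k] F) ∘ₗ r)
  rw [← LinearMap.comp_assoc, ← LinearMap.comp_assoc, hx']
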